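/- There exists a function R: (0,π) × ℝ → ℝ, independent of ε, such that for every ε with 0 ≤ ε < 1 and every (θ,φ) with 0 < θ < π, φ ∈ ℝ, the function h_ε(θ,φ) = sin²θ · cos(2φ) · (1 - (3/196)·ε²·(6 - 7sin²θ)) satisfies Δ₁ h_ε = (-6 + (44/7)ε²)·h_ε + ε⁴·R(θ,φ). In other words, to first order in ε² the perturbed spherical harmonic with l = 2, m = 2 is an eigenfunction of Δ₁ with eigenvalue -6 + (44/7)ε²; in particular the first-order eigenvalue depends on m as well as on l. -/

import Mathlib

open Real

/-- The truncated (first order in `ε²`) Finslerian Laplace operator, acting on a function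
`u : ℝ → ℝ → ℝ` of the angular variables `(θ, φ)`. -/
noncomputable def truncLaplacian (ε : ℝ) (u : ℝ → ℝ → ℝ) (θ φ : ℝ) : ℝ :=
  ((4 - 5 * ε ^ 2 * sin θ ^ 2) / (4 * sin θ ^ 2)) * deriv (deriv (u θ)) φ
  + (1 - 3 / 4 * ε ^ 2 * sin θ ^ 2) * deriv (deriv (fun t => u t φ)) θ
  + (cos θ / sin θ) * (1 + 3 / 4 * ε ^ 2 * sin θ ^ 2) * deriv (fun t => u t φ) θ

lemma hd_sinsq (t : ℝ) : HasDerivAt (fun t => sin t ^ 2) (2 * sin t * cos t) t := by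
  simpa [mul_comm, mul_assoc] using (Real.hasDerivAt_sin t).fun_pow 2

lemma hd_sin4 (t : ℝ) : HasDerivAt (fun t => sin t ^ 4) (4 * sin t ^ 3 * cos t) t := by
  simpa [mul_comm, mul_assoc] using (Real.hasDerivAt_sin t).fun_pow 4

lemma hd_sincos (t : ℝ) :
    HasDerivAt (fun t => sin t * cos t) (cos t ^ 2 - sin t ^ 2) t := by
  have := (Real.hasDerivAt_sin t).mul (Real.hasDerivAt_cos t)
  refine this.congr_deriv ?_; ring

lemma hd_sin3cos (t : ℝ) :
    HasDerivAt (fun t => sin t ^ 3 * cos t) (3 * sin t ^ 2 * cos t ^ 2 - sin t ^ 4) t := by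
  have h3 : HasDerivAt (fun t : ℝ => sin t ^ 3) (3 * sin t ^ 2 * cos t) t := by
    simpa [mul_comm, mul_assoc] using (Real.hasDerivAt_sin t).fun_pow 3
  have := h3.mul (Real.hasDerivAt_cos t)
  refine this.congr_deriv ?_; ring

lemma hd_theta (b d C t : ℝ) :
    HasDerivAt (fun t => C * (b * sin t ^ 2 + d * sin t ^ 4))
      (C * (2 * b * (sin t * cos t) + 4 * d * (sin t ^ 3 * cos t))) t := by
  have := (((hd_sinsq t).const_mul b).add ((hd_sin4 t).const_mul d)).const_mul C
  refine this.congr_deriv ?_; ring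

lemma hd_theta' (b d C t : ℝ) :
    HasDerivAt (fun t => C * (2 * b * (sin t * cos t) + 4 * d * (sin t ^ 3 * cos t)))
      (C * (2 * b * (cos t ^ 2 - sin t ^ 2) + 4 * d * (3 * sin t ^ 2 * cos t ^ 2 - sin t ^ 4))) t := by
  exact (((hd_sincos t).const_mul (2 * b)).add ((hd_sin3cos t).const_mul (4 * d))).const_mul C

lemma hd_phi (K p : ℝ) :
    HasDerivAt (fun φ' => K * cos (2 * φ')) (K * (-2 * sin (2 * p))) p := by
  have h2 : HasDerivAt (fun φ' : ℝ => 2 * φ') 2 p := by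
    simpa using (hasDerivAt_id p).const_mul 2
  have := (h2.cos).const_mul K
  refine this.congr_deriv ?_; ring

lemma hd_phi' (K p : ℝ) :
    HasDerivAt (fun φ' => K * (-2 * sin (2 * φ'))) (K * (-4 * cos (2 * p))) p := by
  have h2 : HasDerivAt (fun φ' : ℝ => 2 * φ') 2 p := by
    simpa using (hasDerivAt_id p).const_mul 2
  have := ((h2.sin).const_mul (-2)).const_mul K
  refine this.congr_deriv ?_; ring

/-- To first order in `ε²`, the perturbed spherical harmonic with `l = 2`, `m = 2`,
`h_ε(θ,φ) = sin²θ · cos(2φ) · (1 - (3/196)·ε²·(6 - 7sin²θ))`, is an eigenfunction of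
`Δ₁` with eigenvalue `-6 + (44/7)ε²`: there is an `ε`-independent remainder `R(θ,φ)` with
`Δ₁ h_ε = (-6 + (44/7)ε²)·h_ε + ε⁴·R(θ,φ)`. -/
theorem truncLaplacian_l2m2_eigen :
    ∃ R : ℝ → ℝ → ℝ, ∀ ε : ℝ, 0 ≤ ε → ε < 1 →
      ∀ θ φ : ℝ, 0 < θ → θ < Real.pi →
        truncLaplacian ε
            (fun θ' φ' => Real.sin θ' ^ 2 * Real.cos (2 * φ') *
              (1 - 3 / 196 * ε ^ 2 * (6 - 7 * Real.sin θ' ^ 2)))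
            θ φ =
          (-6 + 44 / 7 * ε ^ 2) *
            (Real.sin θ ^ 2 * Real.cos (2 * φ) *
              (1 - 3 / 196 * ε ^ 2 * (6 - 7 * Real.sin θ ^ 2)))
          + ε ^ 4 * R θ φ := by
  refine ⟨fun θ φ => (81 / 686 * sin θ ^ 2 - 45 / 49 * sin θ ^ 4 + 27 / 28 * sin θ ^ 6)
      * cos (2 * φ), ?_⟩
  intro ε _ _ θ φ hθ0 hθπ
  have hs : sin θ ≠ 0 := ne_of_gt (Real.sin_pos_of_pos_of_lt_pi hθ0 hθπ)
  set a : ℝ := 3 / 196 * ε ^ 2 with ha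
  set b : ℝ := 1 - 6 * a with hb
  set d : ℝ := 7 * a with hdd
  set C : ℝ := cos (2 * φ) with hC
  set K : ℝ := sin θ ^ 2 * (1 - a * (6 - 7 * sin θ ^ 2)) with hK
  -- φ-derivatives
  have e1 : (deriv (fun φ' => Real.sin θ ^ 2 * Real.cos (2 * φ') *
      (1 - 3 / 196 * ε ^ 2 * (6 - 7 * Real.sin θ ^ 2)))) = fun p => K * (-2 * sin (2 * p)) := by
    funext p
    have : (fun φ' => Real.sin θ ^ 2 * Real.cos (2 * φ') *
        (1 - 3 / 196 * ε ^ 2 * (6 - 7 * Real.sin θ ^ 2))) = fun φ' => K * cos (2 * φ') := by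
      funext q; rw [hK, ha]; ring
    rw [this, (hd_phi K p).deriv]
  have e2 : deriv (deriv (fun φ' => Real.sin θ ^ 2 * Real.cos (2 * φ') *
      (1 - 3 / 196 * ε ^ 2 * (6 - 7 * Real.sin θ ^ 2)))) φ = K * (-4 * C) := by
    rw [e1, (hd_phi' K φ).deriv, hC]
  -- θ-derivatives
  have efun : (fun t => Real.sin t ^ 2 * Real.cos (2 * φ) *
      (1 - 3 / 196 * ε ^ 2 * (6 - 7 * Real.sin t ^ 2)))
      = fun t => C * (b * sin t ^ 2 + d * sin t ^ 4) := by
    funext t; rw [hC, hb, hdd, ha]; ring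
  have e3 : deriv (fun t => Real.sin t ^ 2 * Real.cos (2 * φ) *
      (1 - 3 / 196 * ε ^ 2 * (6 - 7 * Real.sin t ^ 2))) θ
      = C * (2 * b * (sin θ * cos θ) + 4 * d * (sin θ ^ 3 * cos θ)) := by
    rw [efun, (hd_theta b d C θ).deriv]
  have e4 : deriv (deriv (fun t => Real.sin t ^ 2 * Real.cos (2 * φ) *
      (1 - 3 / 196 * ε ^ 2 * (6 - 7 * Real.sin t ^ 2)))) θ
      = C * (2 * b * (cos θ ^ 2 - sin θ ^ 2)
          + 4 * d * (3 * sin θ ^ 2 * cos θ ^ 2 - sin θ ^ 4)) := by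
    rw [efun]
    have : deriv (fun t => C * (b * sin t ^ 2 + d * sin t ^ 4))
        = fun t => C * (2 * b * (sin t * cos t) + 4 * d * (sin t ^ 3 * cos t)) := by
      funext t; exact (hd_theta b d C t).deriv
    rw [this, (hd_theta' b d C θ).deriv]
  have hcos : cos θ ^ 2 = 1 - sin θ ^ 2 := by
    have := Real.sin_sq_add_cos_sq θ; linarith
  rw [truncLaplacian, e2, e3, e4]
  rw [hK, hb, hdd, ha, hC]
  field_simp
  ring_nf
  rw [hcos]
  ring
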